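/- Let $H$ be a real $2N \times 2N$ Hamiltonian matrix (i.e. $JH$ is symmetric) that is hyperbolic (no purely imaginary eigenvalues). Then its stable subspace $E^s = \{v \in \mathbb{R}^{2N} : e^{\tau H}v \to 0 \text{ as } \tau \to +\infty\}$ is a Lagrangian subspace of $(\mathbb{R}^{2N}, \omega)$: it is $N$-dimensional and $\omega(u,v) = 0$ for all $u,v \in E^s$. -/

import Mathlib

open Matrix Filter NormedSpace

set_option linter.unusedSectionVars false
set_option maxHeartbeats 1000000

section Aux

variable {m : Type*} [Fintype m] [DecidableEq m]

lemma exp_symp (H Jm : Matrix m m ℝ) (hJJ : Jm * Jm = -1) (hJt : Jmᵀ = -Jm)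
    (hHam : (Jm * H).IsSymm) (τ : ℝ) :
    (exp (τ • H))ᵀ * Jm * exp (τ • H) = Jm := by
  have h1 : Hᵀ * (-Jm) = Jm * H := by rw [← hJt, ← transpose_mul]; exact hHam
  have hHt : Hᵀ = Jm * H * Jm := by
    have h2 : Hᵀ * (-Jm) * Jm = Jm * H * Jm := by rw [h1]
    rwa [mul_assoc, neg_mul, hJJ, neg_neg, mul_one] at h2
  let u : (Matrix m m ℝ)ˣ := ⟨Jm, -Jm, by rw [mul_neg, hJJ, neg_neg],
    by rw [neg_mul, hJJ, neg_neg]⟩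
  have key : exp ((τ • H)ᵀ) = Jm * exp (τ • (-H)) * (-Jm) := by
    have h3 : (τ • H)ᵀ = (u : Matrix m m ℝ) * (τ • (-H)) * ((u⁻¹ : (Matrix m m ℝ)ˣ) : Matrix m m ℝ) := by
      show (τ • H)ᵀ = Jm * (τ • (-H)) * (-Jm)
      rw [transpose_smul, hHt]
      simp [smul_neg, mul_neg, neg_mul, neg_neg, mul_smul_comm, smul_mul_assoc, mul_assoc]
    rw [h3, Matrix.exp_units_conj u]
    rfl
  have hcomm : Commute (τ • (-H)) (τ • H) :=
    (((Commute.refl H).neg_left).smul_left τ).smul_right τ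
  have h4 : exp (τ • (-H)) * exp (τ • H) = 1 := by
    rw [← Matrix.exp_add_of_commute _ _ hcomm]
    simp
  calc (exp (τ • H))ᵀ * Jm * exp (τ • H)
      = (Jm * exp (τ • (-H)) * (-Jm)) * Jm * exp (τ • H) := by
        rw [← Matrix.exp_transpose, key]
    _ = Jm * (exp (τ • (-H)) * (((-Jm) * Jm) * exp (τ • H))) := by
        simp only [mul_assoc]
    _ = Jm := by rw [neg_mul, hJJ, neg_neg, one_mul, h4, mul_one]

lemma cont_pair (Jm : Matrix m m ℝ) :
    Continuous fun p : (m → ℝ) × (m → ℝ) => Jm.mulVec p.1 ⬝ᵥ p.2 := by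
  simp only [mulVec, dotProduct]
  exact continuous_finset_sum _ fun i _ =>
    (continuous_finset_sum _ fun j _ =>
      continuous_const.mul ((continuous_apply j).comp continuous_fst)).mul
      ((continuous_apply i).comp continuous_snd)

lemma isotropic (H Jm : Matrix m m ℝ) (hJJ : Jm * Jm = -1) (hJt : Jmᵀ = -Jm)
    (hHam : (Jm * H).IsSymm) {u v : m → ℝ}
    (hu : Tendsto (fun τ : ℝ => (exp (τ • H)).mulVec u) atTop (nhds 0))
    (hv : Tendsto (fun τ : ℝ => (exp (τ • H)).mulVec v) atTop (nhds 0)) :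
    Jm.mulVec u ⬝ᵥ v = 0 := by
  have hconst : ∀ τ : ℝ,
      Jm.mulVec ((exp (τ • H)).mulVec u) ⬝ᵥ (exp (τ • H)).mulVec v = Jm.mulVec u ⬝ᵥ v := by
    intro τ
    rw [mulVec_mulVec, dotProduct_mulVec, ← mulVec_transpose, mulVec_mulVec, ← mul_assoc,
      exp_symp H Jm hJJ hJt hHam τ]
  have h0 : Tendsto (fun τ : ℝ =>
      Jm.mulVec ((exp (τ • H)).mulVec u) ⬝ᵥ (exp (τ • H)).mulVec v) atTop (nhds 0) := by
    have := ((cont_pair Jm).tendsto ((0 : m → ℝ), (0 : m → ℝ))).comp (hu.prodMk_nhds hv)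
    simpa [Function.comp_def] using this
  exact tendsto_nhds_unique tendsto_const_nhds (h0.congr hconst)

lemma isotropic_finrank (Jm : Matrix m m ℝ) (hJJ : Jm * Jm = -1)
    (E : Submodule ℝ (m → ℝ)) (hE : ∀ u ∈ E, ∀ v ∈ E, Jm.mulVec u ⬝ᵥ v = 0) :
    Module.finrank ℝ E + Module.finrank ℝ E ≤ Fintype.card m := by
  classical
  let B : (m → ℝ) →ₗ[ℝ] (m → ℝ) →ₗ[ℝ] ℝ :=
    LinearMap.mk₂ ℝ (fun u v => Jm.mulVec u ⬝ᵥ v)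
      (fun u u' v => by simp [mulVec_add, add_dotProduct])
      (fun c u v => by simp [mulVec_smul, smul_dotProduct])
      (fun u v v' => by simp [dotProduct_add])
      (fun c u v => by simp [dotProduct_smul])
  have hBinj : Function.Injective B := by
    rw [← LinearMap.ker_eq_bot, Submodule.eq_bot_iff]
    intro u hu
    have h1 : Jm.mulVec u ⬝ᵥ Jm.mulVec u = 0 := by
      have := LinearMap.congr_fun (hu : B u = 0) (Jm.mulVec u)
      simpa [B] using this
    have h2 : Jm.mulVec u = 0 := by
      rwa [dotProduct_self_eq_zero] at h1
    have h3 : ((-Jm) * Jm).mulVec u = 0 := by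
      rw [← mulVec_mulVec, h2, mulVec_zero]
    rwa [neg_mul, hJJ, neg_neg, one_mulVec] at h3
  have hmap : E.map B ≤ E.dualAnnihilator := by
    rintro φ ⟨u, hu, rfl⟩
    rw [Submodule.mem_dualAnnihilator]
    intro w hw
    exact hE u hu w hw
  have h1 : Module.finrank ℝ (E.map B) = Module.finrank ℝ E :=
    (LinearEquiv.finrank_eq (Submodule.equivMapOfInjective B hBinj E)).symm
  have h2 : Module.finrank ℝ E ≤ Module.finrank ℝ E.dualAnnihilator := by
    rw [← h1]
    exact Submodule.finrank_mono hmap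
  have h3 : Module.finrank ℝ E.dualAnnihilator
      = Module.finrank ℝ ((m → ℝ) ⧸ E) :=
    (LinearEquiv.finrank_eq (Subspace.quotEquivAnnihilator E)).symm
  have h4 := Submodule.finrank_quotient_add_finrank E
  have h5 : Module.finrank ℝ (m → ℝ) = Fintype.card m :=
    Module.finrank_pi ℝ
  omega

def stableSub (𝔸 : Type*) [RCLike 𝔸] (A : Matrix m m 𝔸) : Submodule 𝔸 (m → 𝔸) where
  carrier := {w | Tendsto (fun τ : ℝ => (exp (τ • A)).mulVec w) atTop (nhds 0)}
  add_mem' := by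
    intro a b ha hb
    simp only [Set.mem_setOf_eq, mulVec_add] at *
    simpa using ha.add hb
  zero_mem' := by
    simp only [Set.mem_setOf_eq, mulVec_zero]
    exact tendsto_const_nhds
  smul_mem' := by
    intro c x hx
    simp only [Set.mem_setOf_eq, mulVec_smul] at *
    simpa using hx.const_smul c

lemma mem_stableSub {𝔸 : Type*} [RCLike 𝔸] {A : Matrix m m 𝔸} {w : m → 𝔸} :
    w ∈ stableSub 𝔸 A ↔ Tendsto (fun τ : ℝ => (exp (τ • A)).mulVec w) atTop (nhds 0) :=
  Iff.rfl

lemma scalar_decay {a : ℝ} (ha : a < 0) (j : ℕ) :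
    Tendsto (fun τ : ℝ => τ ^ j * Real.exp (a * τ)) atTop (nhds 0) := by
  have hpos : (0 : ℝ) < -a := by linarith
  have h1 : Tendsto (fun τ : ℝ => ((-a) * τ) ^ j * Real.exp (-((-a) * τ))) atTop (nhds 0) :=
    (Real.tendsto_pow_mul_exp_neg_atTop_nhds_zero j).comp (tendsto_id.const_mul_atTop hpos)
  have h2 := h1.const_mul (((-a) ^ j)⁻¹)
  rw [mul_zero] at h2
  refine h2.congr fun τ => ?_
  have hne : ((-a) ^ j) ≠ 0 := pow_ne_zero _ (by linarith)
  rw [mul_pow]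
  field_simp

lemma decay (A : Matrix m m ℂ) (μ : ℂ) (hμ : μ.re < 0) (w : m → ℂ) (k : ℕ)
    (hw : ((A - μ • 1) ^ k).mulVec w = 0) :
    Tendsto (fun τ : ℝ => (exp (τ • A)).mulVec w) atTop (nhds 0) := by
  letI : SeminormedRing (Matrix m m ℂ) := Matrix.linftyOpSemiNormedRing
  letI : NormedRing (Matrix m m ℂ) := Matrix.linftyOpNormedRing
  letI : NormedAlgebra ℝ (Matrix m m ℂ) := Matrix.linftyOpNormedAlgebra
  letI : NormedAlgebra ℚ (Matrix m m ℂ) := Matrix.linftyOpNormedAlgebra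
  letI : NormedAlgebra ℂ (Matrix m m ℂ) := Matrix.linftyOpNormedAlgebra
  set Nm : Matrix m m ℂ := A - μ • 1 with hNm
  -- step 1 : split the exponential
  have hsplit : ∀ τ : ℝ, exp (τ • A) = Complex.exp (τ • μ) • exp (τ • Nm) := by
    intro τ
    have hcomm : Commute (τ • (μ • (1 : Matrix m m ℂ))) (τ • Nm) := by
      apply Commute.smul_left; apply Commute.smul_right; apply Commute.smul_left
      exact Commute.one_left _
    have h1 : τ • A = τ • (μ • (1 : Matrix m m ℂ)) + τ • Nm := by
      rw [← smul_add]; congr 1; rw [hNm]; abel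
    rw [h1, Matrix.exp_add_of_commute _ _ hcomm]
    have h2 : τ • (μ • (1 : Matrix m m ℂ)) = algebraMap ℂ (Matrix m m ℂ) ((τ : ℂ) * μ) := by
      rw [Algebra.algebraMap_eq_smul_one, ← smul_assoc]
      norm_num
    rw [h2]; erw [← map_exp (algebraMap ℂ (Matrix m m ℂ)) (continuous_algebraMap ℂ _)]
    have h3 : exp ((τ : ℂ) * μ) = Complex.exp (τ • μ) := by
      rw [Complex.real_smul, Complex.exp_eq_exp_ℂ]
    rw [h3, Algebra.algebraMap_eq_smul_one, smul_mul_assoc, one_mul]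
  -- step 2 : nilpotent part is a polynomial
  have hfin : ∀ τ : ℝ, (exp (τ • Nm)).mulVec w
      = ∑ j ∈ Finset.range k, (τ ^ j * ((j.factorial : ℝ))⁻¹) • (Nm ^ j).mulVec w := by
    intro τ
    have hs : HasSum (fun j : ℕ => ((j.factorial : ℝ))⁻¹ • (τ • Nm) ^ j) (exp (τ • Nm)) :=
      exp_series_hasSum_exp' (τ • Nm)
    let L : Matrix m m ℂ →ₗ[ℝ] (m → ℂ) :=
      { toFun := fun B => B.mulVec w
        map_add' := fun B C => Matrix.add_mulVec B C w
        map_smul' := fun c B => Matrix.smul_mulVec c B w }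
    have hL : Continuous L := L.continuous_of_finiteDimensional
    have hs2 := (⟨L, hL⟩ : Matrix m m ℂ →L[ℝ] (m → ℂ)).hasSum hs
    have hs3 : HasSum (fun j : ℕ => (τ ^ j * ((j.factorial : ℝ))⁻¹) • (Nm ^ j).mulVec w)
        ((exp (τ • Nm)).mulVec w) := by
      refine hs2.congr_fun fun j => ?_
      show (τ ^ j * ((j.factorial : ℝ))⁻¹) • (Nm ^ j).mulVec w
          = L (((j.factorial : ℝ))⁻¹ • (τ • Nm) ^ j)
      simp only [L, LinearMap.coe_mk, AddHom.coe_mk, smul_pow, smul_mulVec,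
        Matrix.smul_mulVec]
      rw [smul_smul, mul_comm]
    have hvanish : ∀ j ∉ Finset.range k,
        (τ ^ j * ((j.factorial : ℝ))⁻¹) • (Nm ^ j).mulVec w = 0 := by
      intro j hj
      rw [Finset.mem_range, not_lt] at hj
      have : Nm ^ j = Nm ^ (j - k) * Nm ^ k := by rw [← pow_add]; congr 1; omega
      rw [this, ← mulVec_mulVec, hw, mulVec_zero, smul_zero]
    exact (hs3.unique (hasSum_sum_of_ne_finset_zero hvanish))
  -- step 3 : each term tends to zero
  have hterm : ∀ j : ℕ, Tendsto (fun τ : ℝ =>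
      (Complex.exp (τ • μ) * ((τ ^ j * ((j.factorial : ℝ))⁻¹ : ℝ) : ℂ)) • (Nm ^ j).mulVec w)
      atTop (nhds 0) := by
    intro j
    have hc : Tendsto (fun τ : ℝ =>
        Complex.exp (τ • μ) * ((τ ^ j * ((j.factorial : ℝ))⁻¹ : ℝ) : ℂ)) atTop (nhds 0) := by
      rw [tendsto_zero_iff_norm_tendsto_zero]
      have heq : ∀ᶠ τ : ℝ in atTop,
          ((j.factorial : ℝ))⁻¹ * (τ ^ j * Real.exp (μ.re * τ))
            = ‖Complex.exp (τ • μ) * ((τ ^ j * ((j.factorial : ℝ))⁻¹ : ℝ) : ℂ)‖ := by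
        filter_upwards [eventually_ge_atTop (0 : ℝ)] with τ hτ
        rw [norm_mul, Complex.norm_exp]
        have : (τ • μ).re = μ.re * τ := by
          rw [Complex.real_smul]; simp [Complex.mul_re]; ring
        rw [this, Complex.norm_real, Real.norm_eq_abs, abs_of_nonneg
          (by positivity : (0:ℝ) ≤ τ ^ j * ((j.factorial : ℝ))⁻¹)]
        ring
      have hlim := (scalar_decay hμ j).const_mul (((j.factorial : ℝ))⁻¹)
      rw [mul_zero] at hlim
      exact Tendsto.congr' heq hlim
    simpa using hc.smul_const ((Nm ^ j).mulVec w)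
  -- assemble
  have hmain : ∀ τ : ℝ, (exp (τ • A)).mulVec w
      = ∑ j ∈ Finset.range k,
        (Complex.exp (τ • μ) * ((τ ^ j * ((j.factorial : ℝ))⁻¹ : ℝ) : ℂ)) • (Nm ^ j).mulVec w := by
    intro τ
    rw [hsplit τ, Matrix.smul_mulVec, hfin τ, Finset.smul_sum]
    refine Finset.sum_congr rfl fun j _ => ?_
    rw [← algebraMap_smul ℂ (τ ^ j * ((j.factorial : ℝ))⁻¹) ((Nm ^ j).mulVec w), smul_smul]
    norm_num
  have := tendsto_finset_sum (Finset.range k) (fun j _ => hterm j)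
  rw [Finset.sum_const_zero] at this
  exact Tendsto.congr (fun τ => (hmain τ).symm) this

lemma stable_sup_unstable (A : Matrix m m ℂ) (hhyp : ∀ z ∈ spectrum ℂ A, z.re ≠ 0) :
    stableSub ℂ A ⊔ stableSub ℂ (-A) = ⊤ := by
  rw [eq_top_iff]
  set f : Module.End ℂ (m → ℂ) := Matrix.toLinAlgEquiv' A with hf
  rw [← Module.End.iSup_maxGenEigenspace_eq_top f]
  apply iSup_le
  intro μ
  have hconv : ∀ (k : ℕ) (x : m → ℂ), ((f - μ • 1) ^ k) x = ((A - μ • 1) ^ k).mulVec x := by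
    intro k x
    have h1 : f - μ • 1 = Matrix.toLinAlgEquiv' (A - μ • 1) := by
      rw [map_sub, _root_.map_smul, _root_.map_one, hf]
    rw [h1, ← map_pow]
    rfl
  rcases eq_or_ne (Module.End.maxGenEigenspace f μ) ⊥ with h | h
  · rw [h]; exact bot_le
  · have hspec : μ ∈ spectrum ℂ A := by
      obtain ⟨x, hx, hx0⟩ := Submodule.exists_mem_ne_zero_of_ne_bot h
      rw [Module.End.mem_maxGenEigenspace] at hx
      obtain ⟨k, hk⟩ := hx
      have hev : f.HasEigenvalue μ := by
        refine Module.End.hasEigenvalue_of_hasGenEigenvalue (k := k) ?_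
        rw [Module.End.hasGenEigenvalue_iff]
        intro hbot
        have hxmem : x ∈ f.genEigenspace μ k := by
          rw [Module.End.genEigenspace_nat]
          exact hk
        rw [hbot] at hxmem
        exact hx0 (by simpa using hxmem)
      rw [Module.End.hasEigenvalue_iff_mem_spectrum] at hev
      rwa [hf, AlgEquiv.spectrum_eq Matrix.toLinAlgEquiv' A] at hev
    rcases lt_or_gt_of_ne (hhyp μ hspec) with hneg | hpos
    · refine le_trans ?_ (le_sup_left :
        stableSub ℂ A ≤ stableSub ℂ A ⊔ stableSub ℂ (-A))
      intro x hx
      rw [Module.End.mem_maxGenEigenspace] at hx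
      obtain ⟨k, hk⟩ := hx
      rw [hconv] at hk
      exact mem_stableSub.mpr (decay A μ hneg x k hk)
    · refine le_trans ?_ (le_sup_right :
        stableSub ℂ (-A) ≤ stableSub ℂ A ⊔ stableSub ℂ (-A))
      intro x hx
      rw [Module.End.mem_maxGenEigenspace] at hx
      obtain ⟨k, hk⟩ := hx
      rw [hconv] at hk
      have hμ' : (-μ).re < 0 := by simp only [Complex.neg_re]; linarith
      have hk' : (((-A) - (-μ) • 1) ^ k).mulVec x = 0 := by
        have h2 : (-A) - (-μ) • 1 = -(A - μ • 1) := by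
          rw [neg_smul]; abel
        rw [h2, neg_pow, ← mulVec_mulVec, hk, mulVec_zero]
      exact mem_stableSub.mpr (decay (-A) (-μ) hμ' x k hk')

noncomputable def reLM : (m → ℂ) →ₗ[ℝ] (m → ℝ) where
  toFun w i := (w i).re
  map_add' a b := by ext i; simp
  map_smul' c a := by ext i; simp [Complex.real_smul, Complex.mul_re]

lemma reLM_mulVec (M : Matrix m m ℝ) (w : m → ℂ) :
    reLM ((M.map Complex.ofReal).mulVec w) = M.mulVec (reLM w) := by
  ext i
  simp only [reLM, LinearMap.coe_mk, AddHom.coe_mk, mulVec, dotProduct, map_apply]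
  rw [Complex.re_sum]
  exact Finset.sum_congr rfl fun j _ => by simp [Complex.mul_re]

lemma exp_map_ofReal (M : Matrix m m ℝ) :
    (exp M).map Complex.ofReal = exp (M.map Complex.ofReal) := by
  letI : SeminormedRing (Matrix m m ℝ) := Matrix.linftyOpSemiNormedRing
  letI : NormedRing (Matrix m m ℝ) := Matrix.linftyOpNormedRing
  letI : NormedAlgebra ℝ (Matrix m m ℝ) := Matrix.linftyOpNormedAlgebra
  letI : SeminormedRing (Matrix m m ℂ) := Matrix.linftyOpSemiNormedRing
  letI : NormedRing (Matrix m m ℂ) := Matrix.linftyOpNormedRing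
  letI : NormedAlgebra ℝ (Matrix m m ℂ) := Matrix.linftyOpNormedAlgebra
  letI : NormedAlgebra ℚ (Matrix m m ℝ) := Matrix.linftyOpNormedAlgebra
  letI : NormedAlgebra ℚ (Matrix m m ℂ) := Matrix.linftyOpNormedAlgebra
  have hc : Continuous (Complex.ofRealHom.mapMatrix :
      Matrix m m ℝ →+* Matrix m m ℂ) := by
    show Continuous fun M : Matrix m m ℝ => M.map Complex.ofRealHom
    exact continuous_id.matrix_map Complex.continuous_ofReal
  exact map_exp (Complex.ofRealHom.mapMatrix : Matrix m m ℝ →+* Matrix m m ℂ) hc M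

lemma smul_map_ofReal (τ : ℝ) (M : Matrix m m ℝ) :
    (τ • M).map Complex.ofReal = τ • (M.map Complex.ofReal) := by
  ext i j
  simp [Complex.real_smul]

lemma real_of_complex_stable (M : Matrix m m ℝ) (s : m → ℂ)
    (hs : Tendsto (fun τ : ℝ => (exp (τ • (M.map Complex.ofReal))).mulVec s) atTop (nhds 0)) :
    Tendsto (fun τ : ℝ => (exp (τ • M)).mulVec (reLM s)) atTop (nhds 0) := by
  have hre : Continuous (reLM : (m → ℂ) →ₗ[ℝ] (m → ℝ)) :=
    LinearMap.continuous_of_finiteDimensional _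
  have h := (hre.tendsto 0).comp hs
  rw [map_zero] at h
  refine h.congr fun τ => ?_
  show reLM ((exp (τ • (M.map Complex.ofReal))).mulVec s) = (exp (τ • M)).mulVec (reLM s)
  rw [← smul_map_ofReal, ← exp_map_ofReal, reLM_mulVec]

end Aux

theorem stmt6 (N : ℕ) (H : Matrix (Fin N ⊕ Fin N) (Fin N ⊕ Fin N) ℝ)
    (J : Matrix (Fin N ⊕ Fin N) (Fin N ⊕ Fin N) ℝ) (hJ : J = fromBlocks 0 (-1) 1 0)
    (hHam : (J * H).IsSymm)
    (hhyp : ∀ z ∈ spectrum ℂ (H.map Complex.ofReal), z.re ≠ 0)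
    (Es : Submodule ℝ ((Fin N ⊕ Fin N) → ℝ))
    (hEs : ∀ u, u ∈ Es ↔ Filter.Tendsto (fun τ : ℝ => (NormedSpace.exp (τ • H)).mulVec u)
      Filter.atTop (nhds 0)) :
    Module.finrank ℝ Es = N ∧ ∀ u ∈ Es, ∀ v ∈ Es, J.mulVec u ⬝ᵥ v = 0 := by
  classical
  have hJt : Jᵀ = -J := by
    rw [hJ, fromBlocks_transpose]
    rw [show -fromBlocks (0 : Matrix (Fin N) (Fin N) ℝ) (-1) 1 0
      = fromBlocks (-0) (-(-1)) (-1) (-0) from Matrix.fromBlocks_neg _ _ _ _]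
    simp
  have hJJ : J * J = -1 := by
    rw [hJ, fromBlocks_multiply]
    rw [show (-1 : Matrix (Fin N ⊕ Fin N) (Fin N ⊕ Fin N) ℝ)
      = -(fromBlocks 1 0 0 1) from by rw [Matrix.fromBlocks_one]]
    rw [show -fromBlocks (1 : Matrix (Fin N) (Fin N) ℝ) 0 0 1
      = fromBlocks (-1) (-0) (-0) (-1) from Matrix.fromBlocks_neg _ _ _ _]
    simp
  set Hc : Matrix (Fin N ⊕ Fin N) (Fin N ⊕ Fin N) ℂ := H.map Complex.ofReal with hHc
  have hnegmap : (-H).map Complex.ofReal = -Hc := by ext i j; simp [hHc]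
  have hIsoEs : ∀ u ∈ Es, ∀ v ∈ Es, J.mulVec u ⬝ᵥ v = 0 := fun u hu v hv =>
    isotropic H J hJJ hJt hHam ((hEs u).1 hu) ((hEs v).1 hv)
  have hHam' : (J * (-H)).IsSymm := by
    show (J * -H)ᵀ = J * -H
    rw [mul_neg, transpose_neg, hHam]
  set Eu : Submodule ℝ ((Fin N ⊕ Fin N) → ℝ) := stableSub ℝ (-H) with hEu
  have hIsoEu : ∀ u ∈ Eu, ∀ v ∈ Eu, J.mulVec u ⬝ᵥ v = 0 := fun u hu v hv =>
    isotropic (-H) J hJJ hJt hHam' (mem_stableSub.mp hu) (mem_stableSub.mp hv)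
  have hsup : Es ⊔ Eu = ⊤ := by
    rw [eq_top_iff]
    intro v _
    have htop := stable_sup_unstable Hc hhyp
    have hvmem : (fun i => ((v i : ℂ))) ∈ stableSub ℂ Hc ⊔ stableSub ℂ (-Hc) := by
      rw [htop]; trivial
    obtain ⟨s, hs, u', hu', heq⟩ := Submodule.mem_sup.mp hvmem
    have hv1 : reLM s ∈ Es := by
      rw [hEs]
      exact real_of_complex_stable H s (mem_stableSub.mp hs)
    have hv2 : reLM u' ∈ Eu := by
      rw [hEu]
      refine mem_stableSub.mpr (real_of_complex_stable (-H) u' ?_)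
      rw [hnegmap]
      exact mem_stableSub.mp hu'
    have hre : reLM s + reLM u' = v := by
      have h1 := congrArg reLM heq
      rw [map_add] at h1
      rw [h1]
      ext i
      simp [reLM]
    exact Submodule.mem_sup.mpr ⟨reLM s, hv1, reLM u', hv2, hre⟩
  have hcard : Fintype.card (Fin N ⊕ Fin N) = N + N := by simp
  have hd1 : Module.finrank ℝ Es + Module.finrank ℝ Es ≤ N + N := by
    rw [← hcard]; exact isotropic_finrank J hJJ Es hIsoEs
  have hd2 : Module.finrank ℝ Eu + Module.finrank ℝ Eu ≤ N + N := by
    rw [← hcard]; exact isotropic_finrank J hJJ Eu hIsoEu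
  have hd3 : N + N ≤ Module.finrank ℝ Es + Module.finrank ℝ Eu := by
    have h1 := Submodule.finrank_sup_add_finrank_inf_eq Es Eu
    rw [hsup] at h1
    have h2 : Module.finrank ℝ (⊤ : Submodule ℝ ((Fin N ⊕ Fin N) → ℝ)) = N + N := by
      rw [finrank_top, Module.finrank_pi, hcard]
    omega
  exact ⟨by omega, hIsoEs⟩
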